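/- Let Q ≥ 2, M, M', t be positive integers with t ≤ M. Let a = (a_1, …, a_M) be sampled uniformly at random from (ℤ/Qℤ)^M, and let S_1, …, S_{M'} ⊆ {1, …, M} be sampled independently and uniformly at random among all subsets of size exactly t. Define c_i := Σ_{j ∈ S_i} a_j mod Q for i = 1, …, M'. Then the joint distribution of (a_1, …, a_M, c_1, …, c_{M'}) is within statistical distance δ of the uniform distribution on (ℤ/Qℤ)^{M+M'}, where δ := (M' + 1) · Q^{1/4} · C(M, t)^{−1/4}; moreover δ ≤ (M' + 1) · (Q · t^t / M^t)^{1/4}. -/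

import Mathlib

open scoped Classical
open Finset

set_option maxHeartbeats 2000000

lemma aux_card_filter_pi {n : ℕ} {α : Type*} [Fintype α] (p : Fin n → α → Prop) :
    (Finset.univ.filter (fun f : Fin n → α => ∀ i, p i (f i))).card
      = ∏ i, (Finset.univ.filter (p i)).card := by
  classical
  calc (Finset.univ.filter (fun f : Fin n → α => ∀ i, p i (f i))).card
      = Fintype.card {f : Fin n → α // ∀ i, p i (f i)} := (Fintype.card_subtype _).symm
    _ = Fintype.card (∀ i, {x : α // p i x}) := Fintype.card_congr Equiv.subtypePiEquivPi
    _ = ∏ i, Fintype.card {x : α // p i x} := Fintype.card_pi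
    _ = ∏ i, (Finset.univ.filter (p i)).card := by simp [Fintype.card_subtype]

-- count with fixed first component
lemma aux_count_eq {n : ℕ} {α β γ : Type*} [Fintype α] [Fintype β] [DecidableEq α] [DecidableEq γ]
    (g : α → β → γ) (A : α) (c : Fin n → γ) :
    (Finset.univ.filter (fun ω : α × (Fin n → β) =>
        ω.1 = A ∧ (fun i => g ω.1 (ω.2 i)) = c)).card
      = ∏ i, (Finset.univ.filter (fun S : β => g A S = c i)).card := by
  classical
  have e : {ω : α × (Fin n → β) // ω.1 = A ∧ (fun i => g ω.1 (ω.2 i)) = c}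
      ≃ {s : Fin n → β // ∀ i, g A (s i) = c i} :=
    { toFun := fun x => ⟨x.1.2, by
        obtain ⟨⟨a, s⟩, h1, h2⟩ := x
        intro i
        subst h1
        exact congrFun h2 i⟩
      invFun := fun s => ⟨(A, s.1), rfl, funext s.2⟩
      left_inv := fun x => by
        obtain ⟨⟨a, s⟩, h1, h2⟩ := x
        subst h1
        rfl
      right_inv := fun s => rfl }
  calc (Finset.univ.filter (fun ω : α × (Fin n → β) =>
        ω.1 = A ∧ (fun i => g ω.1 (ω.2 i)) = c)).card
      = Fintype.card {ω : α × (Fin n → β) // ω.1 = A ∧ (fun i => g ω.1 (ω.2 i)) = c} :=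
        (Fintype.card_subtype _).symm
    _ = Fintype.card {s : Fin n → β // ∀ i, g A (s i) = c i} := Fintype.card_congr e
    _ = (Finset.univ.filter (fun s : Fin n → β => ∀ i, g A (s i) = c i)).card :=
        Fintype.card_subtype _
    _ = ∏ i, (Finset.univ.filter (fun S : β => g A S = c i)).card := by
        convert aux_card_filter_pi (fun i S => g A S = c i) using 2 <;> congr!

-- fibers sum to total
lemma aux_sum_fiber_card {β γ : Type*} [Fintype β] [Fintype γ] [DecidableEq γ] (g : β → γ) :
    ∑ c : γ, (Finset.univ.filter (fun S : β => g S = c)).card = Fintype.card β := by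
  classical
  simp only [Finset.card_filter]
  rw [Finset.sum_comm]
  have : ∀ S : β, (∑ c : γ, if g S = c then (1:ℕ) else 0) = 1 := by
    intro S
    rw [Finset.sum_ite_eq univ (g S) (fun _ => (1:ℕ))]
    simp
  simp only [this]
  rw [Finset.sum_const, smul_eq_mul, mul_one, Finset.card_univ]

lemma aux_count_collision {Q M : ℕ} [NeZero Q] (S S' : Finset (Fin M))
    (hcard : S.card = S'.card) (hne : S ≠ S') :
    (Finset.univ.filter (fun A : Fin M → ZMod Q =>
        ∑ j ∈ S, A j = ∑ j ∈ S', A j)).card = Q ^ (M - 1) := by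
  classical
  have hns : ¬ S ⊆ S' := fun h => hne (Finset.eq_of_subset_of_card_le h hcard.ge)
  obtain ⟨j0, hj0S, hj0S'⟩ := Finset.not_subset.mp hns
  set L : (Fin M → ZMod Q) → ZMod Q := fun A => ∑ j ∈ S, A j - ∑ j ∈ S', A j with hL
  set F : ZMod Q → ℕ := fun v => (Finset.univ.filter (fun A : Fin M → ZMod Q => L A = v)).card
    with hF
  have hsumS : ∀ (A : Fin M → ZMod Q) (v : ZMod Q),
      ∑ j ∈ S, Function.update A j0 (A j0 + v) j = (∑ j ∈ S, A j) + v := by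
    intro A v
    rw [← Finset.sum_erase_add _ _ hj0S, ← Finset.sum_erase_add _ (A) hj0S]
    have : ∑ j ∈ S.erase j0, Function.update A j0 (A j0 + v) j = ∑ j ∈ S.erase j0, A j :=
      Finset.sum_congr rfl fun j hj =>
        Function.update_of_ne (Finset.ne_of_mem_erase hj) _ _
    rw [this, Function.update_self, add_assoc]
  have hsumS' : ∀ (A : Fin M → ZMod Q) (v : ZMod Q),
      ∑ j ∈ S', Function.update A j0 (A j0 + v) j = ∑ j ∈ S', A j := by
    intro A v
    refine Finset.sum_congr rfl fun j hj => Function.update_of_ne ?_ _ _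
    rintro rfl
    exact hj0S' hj
  have hLshift : ∀ (A : Fin M → ZMod Q) (v : ZMod Q),
      L (Function.update A j0 (A j0 + v)) = L A + v := by
    intro A v
    simp only [hL, hsumS, hsumS']
    ring
  have hFconst : ∀ v : ZMod Q, F v = F 0 := by
    intro v
    apply Finset.card_bij' (fun A _ => Function.update A j0 (A j0 - v))
      (fun A _ => Function.update A j0 (A j0 + v))
    case hi =>
      intro A hA
      simp only [Finset.mem_filter, Finset.mem_univ, true_and] at hA ⊢
      have h := hLshift A (-v)
      rw [← sub_eq_add_neg] at h
      rw [h, hA, add_neg_cancel]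
    case hj =>
      intro A hA
      simp only [Finset.mem_filter, Finset.mem_univ, true_and] at hA ⊢
      rw [hLshift A v, hA, zero_add]
    case left_inv =>
      intro A _
      simp [Function.update_idem, Function.update_self, sub_add_cancel,
        Function.update_eq_self]
    case right_inv =>
      intro A _
      simp [Function.update_idem, Function.update_self, add_sub_cancel_right,
        Function.update_eq_self]
  have hsum : ∑ v : ZMod Q, F v = Q ^ M := by
    simp only [hF, Finset.card_filter]
    rw [Finset.sum_comm]
    have : ∀ A : Fin M → ZMod Q, (∑ v : ZMod Q, if L A = v then (1:ℕ) else 0) = 1 := by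
      intro A
      rw [Finset.sum_ite_eq univ (L A) (fun _ => (1:ℕ))]
      simp
    simp only [this]
    rw [Finset.sum_const, smul_eq_mul, mul_one, Finset.card_univ, Fintype.card_fun,
      ZMod.card, Fintype.card_fin]
  have hQM : Q * F 0 = Q ^ M := by
    rw [← hsum]
    rw [Finset.sum_congr rfl (fun v _ => hFconst v), Finset.sum_const, smul_eq_mul,
      Finset.card_univ, ZMod.card]
  have hM1 : 1 ≤ M := by
    rcases Nat.eq_zero_or_pos M with h | h
    · subst h; exact absurd (Finset.eq_empty_of_isEmpty S ▸ Finset.eq_empty_of_isEmpty S' ▸ rfl) hne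
    · exact h
  have hF0 : F 0 = Q ^ (M - 1) := by
    have : Q * F 0 = Q * Q ^ (M - 1) := by
      rw [hQM, ← pow_succ']
      congr 1
      omega
    exact Nat.eq_of_mul_eq_mul_left (Nat.pos_of_ne_zero (NeZero.ne Q)) this
  rw [← hF0, hF]
  congr! 1
  apply Finset.filter_congr
  intro A _
  simp [hL, sub_eq_zero]

lemma aux_sum_sq_le {Q M t : ℕ} [NeZero Q] :
    ∑ A : Fin M → ZMod Q, ∑ c : ZMod Q,
      ((Finset.univ.filter
        (fun S : {S : Finset (Fin M) // S.card = t} => ∑ j ∈ S.1, A j = c)).card) ^ 2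
    ≤ M.choose t * Q ^ M + (M.choose t) ^ 2 * Q ^ (M - 1) := by
  classical
  let σ := {S : Finset (Fin M) // S.card = t}
  have hN : Fintype.card σ = M.choose t := by
    rw [show Fintype.card σ = Fintype.card {S : Finset (Fin M) // S.card = t} from rfl,
      Fintype.card_finset_len, Fintype.card_fin]
  have key : ∀ a b : ZMod Q,
      (∑ c : ZMod Q, (if a = c then (1:ℕ) else 0) * (if b = c then 1 else 0))
        = if a = b then 1 else 0 := by
    intro a b
    simp only [ite_mul, one_mul, zero_mul]
    rw [Finset.sum_ite_eq univ a (fun c => if b = c then (1:ℕ) else 0)]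
    simp [eq_comm]
  have step1 : ∀ A : Fin M → ZMod Q,
      ∑ c : ZMod Q, ((Finset.univ.filter (fun S : σ => ∑ j ∈ S.1, A j = c)).card) ^ 2
      = ∑ S : σ, ∑ S' : σ, if (∑ j ∈ S.1, A j) = (∑ j ∈ S'.1, A j) then 1 else 0 := by
    intro A
    have e1 : ∀ c : ZMod Q,
        ((Finset.univ.filter (fun S : σ => ∑ j ∈ S.1, A j = c)).card) ^ 2
        = ∑ S : σ, ∑ S' : σ,
            (if (∑ j ∈ S.1, A j) = c then (1:ℕ) else 0)
              * (if (∑ j ∈ S'.1, A j) = c then 1 else 0) := by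
      intro c
      rw [Finset.card_filter, sq, Finset.sum_mul_sum]
    simp only [e1]
    rw [Finset.sum_comm]
    refine Finset.sum_congr rfl fun S _ => ?_
    rw [Finset.sum_comm]
    refine Finset.sum_congr rfl fun S' _ => ?_
    exact key _ _
  calc ∑ A : Fin M → ZMod Q, ∑ c : ZMod Q,
        ((Finset.univ.filter (fun S : σ => ∑ j ∈ S.1, A j = c)).card) ^ 2
      = ∑ A : Fin M → ZMod Q, ∑ S : σ, ∑ S' : σ,
          if (∑ j ∈ S.1, A j) = (∑ j ∈ S'.1, A j) then 1 else 0 := by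
        exact Finset.sum_congr rfl fun A _ => step1 A
    _ = ∑ S : σ, ∑ S' : σ, ∑ A : Fin M → ZMod Q,
          if (∑ j ∈ S.1, A j) = (∑ j ∈ S'.1, A j) then 1 else 0 := by
        rw [Finset.sum_comm]
        refine Finset.sum_congr rfl fun S _ => ?_
        rw [Finset.sum_comm]
    _ ≤ ∑ S : σ, ∑ S' : σ, ((if S = S' then Q ^ M else 0) + Q ^ (M - 1)) := by
        refine Finset.sum_le_sum fun S _ => Finset.sum_le_sum fun S' _ => ?_
        rw [← Finset.card_filter]
        rcases eq_or_ne S S' with h | h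
        · rw [if_pos h]
          refine le_add_of_le_of_nonneg ?_ (Nat.zero_le _)
          calc (Finset.univ.filter (fun A : Fin M → ZMod Q =>
                  (∑ j ∈ S.1, A j) = (∑ j ∈ S'.1, A j))).card
              ≤ (Finset.univ : Finset (Fin M → ZMod Q)).card := Finset.card_filter_le _ _
            _ = Q ^ M := by
                rw [Finset.card_univ, Fintype.card_fun, ZMod.card, Fintype.card_fin]
        · rw [if_neg h, zero_add,
            aux_count_collision S.1 S'.1 (S.2.trans S'.2.symm) (fun hh => h (Subtype.ext hh))]
    _ = M.choose t * Q ^ M + (M.choose t) ^ 2 * Q ^ (M - 1) := by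
        simp only [Finset.sum_add_distrib, Finset.sum_const, Finset.card_univ, smul_eq_mul]
        rw [Finset.sum_congr rfl fun S _ => Finset.sum_ite_eq univ S (fun _ => Q ^ M)]
        simp [hN, sq, mul_assoc, mul_comm, mul_left_comm]

lemma aux_cs {ι : Type*} [Fintype ι] (f : ι → ℝ) (hf : ∀ i, 0 ≤ f i) :
    ∑ i, f i ≤ Real.sqrt ((Fintype.card ι) * ∑ i, (f i) ^ 2) := by
  have h := sq_sum_le_card_mul_sum_sq (s := (univ : Finset ι)) (f := f)
  calc ∑ i, f i = Real.sqrt ((∑ i, f i) ^ 2) :=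
        (Real.sqrt_sq (Finset.sum_nonneg fun i _ => hf i)).symm
    _ ≤ Real.sqrt ((Fintype.card ι) * ∑ i, (f i) ^ 2) := by
        apply Real.sqrt_le_sqrt
        simpa [Finset.card_univ] using h

lemma aux_hybrid {γ : Type*} [Fintype γ] (hK : 0 < Fintype.card γ) (p : γ → ℝ)
    (hp0 : ∀ c, 0 ≤ p c) (hp1 : ∑ c, p c = 1) (n : ℕ) :
    ∑ c : Fin n → γ, |(∏ i, p (c i)) - (1 / (Fintype.card γ : ℝ)) ^ n|
      ≤ n * ∑ c, |p c - 1 / (Fintype.card γ : ℝ)| := by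
  set K : ℝ := (Fintype.card γ : ℝ) with hKdef
  have hK0 : (0:ℝ) < K := by rw [hKdef]; exact_mod_cast hK
  set q : ℝ := 1 / K with hq
  have hq0 : 0 ≤ q := by positivity
  induction n with
  | zero => simp
  | succ n ih =>
    calc ∑ c : Fin (n+1) → γ, |(∏ i, p (c i)) - q ^ (n+1)|
        = ∑ xg : γ × (Fin n → γ), |(∏ i, p ((Fin.cons xg.1 xg.2 : Fin (n+1) → γ) i)) - q ^ (n+1)| := by
          exact (Fintype.sum_equiv (Fin.consEquiv fun _ : Fin (n+1) => γ)
            (fun xg => |(∏ i, p ((Fin.cons xg.1 xg.2 : Fin (n+1) → γ) i)) - q ^ (n+1)|)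
            (fun c => |(∏ i, p (c i)) - q ^ (n+1)|)
            (fun xg => by simp [Fin.consEquiv])).symm
      _ = ∑ x : γ, ∑ g : Fin n → γ, |p x * (∏ i, p (g i)) - q ^ (n+1)| := by
          rw [Fintype.sum_prod_type]
          refine Finset.sum_congr rfl fun x _ => Finset.sum_congr rfl fun g _ => ?_
          congr 1
          rw [Fin.prod_univ_succ]
          simp [Fin.cons_zero, Fin.cons_succ]
      _ ≤ ∑ x : γ, ∑ g : Fin n → γ,
            (p x * |(∏ i, p (g i)) - q ^ n| + q ^ n * |p x - q|) := by
          refine Finset.sum_le_sum fun x _ => Finset.sum_le_sum fun g _ => ?_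
          have hid : p x * (∏ i, p (g i)) - q ^ (n+1)
              = p x * ((∏ i, p (g i)) - q ^ n) + q ^ n * (p x - q) := by
            rw [pow_succ]
            ring
          rw [hid]
          calc |p x * ((∏ i, p (g i)) - q ^ n) + q ^ n * (p x - q)|
              ≤ |p x * ((∏ i, p (g i)) - q ^ n)| + |q ^ n * (p x - q)| := abs_add_le _ _
            _ = p x * |(∏ i, p (g i)) - q ^ n| + q ^ n * |p x - q| := by
                rw [abs_mul, abs_mul, abs_of_nonneg (hp0 x), abs_of_nonneg (pow_nonneg hq0 n)]
      _ = (∑ x : γ, p x * ∑ g : Fin n → γ, |(∏ i, p (g i)) - q ^ n|)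
            + ∑ x : γ, (Fintype.card (Fin n → γ) : ℝ) * (q ^ n * |p x - q|) := by
          rw [← Finset.sum_add_distrib]
          refine Finset.sum_congr rfl fun x _ => ?_
          rw [Finset.sum_add_distrib, Finset.mul_sum, Finset.sum_const, Finset.card_univ,
            nsmul_eq_mul]
      _ ≤ (∑ x : γ, p x * (n * ∑ c, |p c - q|)) + ∑ x : γ, |p x - q| := by
          gcongr with x _ x _
          · exact hp0 x
          · rw [Fintype.card_fun, Fintype.card_fin]
            have : ((Fintype.card γ ^ n : ℕ) : ℝ) * (q ^ n * |p x - q|)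
                = (K ^ n * q ^ n) * |p x - q| := by push_cast [hKdef]; ring
            rw [this, hq, one_div, ← mul_pow, mul_inv_cancel₀ (ne_of_gt hK0), one_pow, one_mul]
      _ = (n * ∑ c, |p c - q|) + ∑ x : γ, |p x - q| := by
          rw [← Finset.sum_mul, hp1, one_mul]
      _ = ((n:ℝ) + 1) * ∑ c, |p c - q| := by ring
      _ = ((n+1 : ℕ) : ℝ) * ∑ c, |p c - q| := by push_cast; ring

lemma aux_pow_le_choose : ∀ (t M : ℕ), t ≤ M → M ^ t ≤ M.choose t * t ^ t := by
  intro t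
  induction t with
  | zero => intro M _; simp
  | succ t ih =>
    intro M htM
    have hM1 : 1 ≤ M := le_trans (Nat.succ_le_succ (Nat.zero_le t)) htM
    rcases Nat.eq_zero_or_pos t with rfl | ht
    · simpa [Nat.choose_one_right] using le_refl M
    have hid : M * (M - 1).choose t = M.choose (t + 1) * (t + 1) := by
      have h := Nat.add_one_mul_choose_eq (M - 1) t
      have hs : M - 1 + 1 = M := Nat.succ_pred_eq_of_pos hM1
      rw [hs] at h
      exact h
    have hih := ih (M - 1) (by omega)
    have hkey : M ^ t * t ^ t ≤ (M - 1) ^ t * (t + 1) ^ t := by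
      rw [← Nat.mul_pow, ← Nat.mul_pow]
      apply Nat.pow_le_pow_left
      have h1 : M * t + (t + 1) ≤ M * (t + 1) := by
        rw [Nat.mul_succ]
        omega
      have h2 : (M - 1) * (t + 1) = M * (t + 1) - (t + 1) := by
        rw [Nat.sub_mul, one_mul]
      omega
    have hchain : M ^ (t + 1) * t ^ t ≤ (M.choose (t + 1) * (t + 1) ^ (t + 1)) * t ^ t := by
      calc M ^ (t + 1) * t ^ t = M * (M ^ t * t ^ t) := by ring
        _ ≤ M * ((M - 1) ^ t * (t + 1) ^ t) := Nat.mul_le_mul_left _ hkey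
        _ ≤ M * (((M - 1).choose t * t ^ t) * (t + 1) ^ t) :=
            Nat.mul_le_mul_left _ (Nat.mul_le_mul_right _ hih)
        _ = (M * (M - 1).choose t) * (t + 1) ^ t * t ^ t := by ring
        _ = (M.choose (t + 1) * (t + 1)) * (t + 1) ^ t * t ^ t := by rw [hid]
        _ = (M.choose (t + 1) * (t + 1) ^ (t + 1)) * t ^ t := by ring
    exact Nat.le_of_mul_le_mul_right hchain (Nat.pow_pos ht)

lemma aux_sum_count {α β γ : Type*} [Fintype α] [Fintype β] [Fintype γ] {n : ℕ}
    (g : α → β → γ) :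
    ∑ z : α × (Fin n → γ),
      ((Finset.univ.filter (fun ω : α × (Fin n → β) =>
        ω.1 = z.1 ∧ (fun i => g ω.1 (ω.2 i)) = z.2)).card)
      = Fintype.card (α × (Fin n → β)) := by
  classical
  simp only [Finset.card_filter]
  rw [Finset.sum_comm]
  have h1 : ∀ ω : α × (Fin n → β),
      (∑ z : α × (Fin n → γ),
        if ω.1 = z.1 ∧ (fun i => g ω.1 (ω.2 i)) = z.2 then (1:ℕ) else 0) = 1 := by
    intro ω
    have : ∀ z : α × (Fin n → γ),
        (if ω.1 = z.1 ∧ (fun i => g ω.1 (ω.2 i)) = z.2 then (1:ℕ) else 0)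
        = if (ω.1, fun i => g ω.1 (ω.2 i)) = z then 1 else 0 := by
      intro z
      congr 1
      simp [Prod.ext_iff]
    simp only [this]
    rw [Finset.sum_ite_eq univ ((ω.1, fun i => g ω.1 (ω.2 i)) : α × (Fin n → γ))
      (fun _ => (1:ℕ))]
    simp
  simp only [h1]
  rw [Finset.sum_const, smul_eq_mul, mul_one, Finset.card_univ]

lemma aux_main_bound {α γ : Type*} [Fintype α] [Fintype γ] (n C : ℕ) (f : α → γ → ℕ)
    (hC : 0 < C) (hK : 0 < Fintype.card γ) (hNA : 0 < Fintype.card α)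
    (hsum : ∀ A, ∑ c, f A c = C)
    (hsq : (∑ A, ∑ c, (f A c) ^ 2) * Fintype.card γ
        ≤ C * Fintype.card α * Fintype.card γ + C ^ 2 * Fintype.card α) :
    ∑ z : α × (Fin n → γ),
      |(∏ i, (f z.1 (z.2 i) : ℝ)) / ((Fintype.card α : ℝ) * (C : ℝ) ^ n)
        - 1 / ((Fintype.card α : ℝ) * (Fintype.card γ : ℝ) ^ n)|
      ≤ n * Real.sqrt (Fintype.card γ) / Real.sqrt C := by
  have hK0 : (0:ℝ) < (Fintype.card γ : ℝ) := by exact_mod_cast hK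
  have hNA0 : (0:ℝ) < (Fintype.card α : ℝ) := by exact_mod_cast hNA
  have hC0 : (0:ℝ) < (C : ℝ) := by exact_mod_cast hC
  set NA : ℝ := (Fintype.card α : ℝ) with hNAdef
  set K : ℝ := (Fintype.card γ : ℝ) with hKdef
  set CR : ℝ := (C : ℝ) with hCRdef
  set p : α → γ → ℝ := fun A c => (f A c : ℝ) / CR with hpdef
  set g : α → ℝ := fun A => ∑ c, (p A c - 1 / K) ^ 2 with hgdef
  have hp0 : ∀ A c, 0 ≤ p A c := fun A c => by positivity
  have hp1 : ∀ A, ∑ c, p A c = 1 := by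
    intro A
    rw [hpdef]
    rw [← Finset.sum_div]
    rw [show (∑ c, (f A c : ℝ)) = (C : ℝ) by exact_mod_cast congrArg Nat.cast (hsum A)]
    exact div_self (ne_of_gt hC0)
  have hg0 : ∀ A, 0 ≤ g A := fun A => Finset.sum_nonneg fun c _ => sq_nonneg _
  -- bound on ∑ g
  have hgsum : ∑ A, g A ≤ NA / CR := by
    have hgA : ∀ A, g A = (∑ c, ((f A c : ℝ)) ^ 2) / CR ^ 2 - 1 / K := by
      intro A
      simp only [hgdef]
      have expand : ∀ c, (p A c - 1 / K) ^ 2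
          = (f A c : ℝ) ^ 2 / CR ^ 2 - 2 * (1 / K) * p A c + (1 / K) ^ 2 := by
        intro c
        rw [hpdef]
        field_simp
        ring
      rw [Finset.sum_congr rfl fun c _ => expand c]
      rw [Finset.sum_add_distrib, Finset.sum_sub_distrib, ← Finset.mul_sum, hp1 A,
        Finset.sum_const, Finset.card_univ, nsmul_eq_mul, ← Finset.sum_div]
      have : (Fintype.card γ : ℝ) * (1 / K) ^ 2 = 1 / K := by
        rw [← hKdef]
        field_simp
      rw [this]
      ring
    rw [Finset.sum_congr rfl fun A _ => hgA A, Finset.sum_sub_distrib, Finset.sum_const,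
      Finset.card_univ, nsmul_eq_mul, ← Finset.sum_div]
    set X : ℝ := ∑ A, ∑ c, ((f A c : ℝ)) ^ 2 with hXdef
    have hX : X * K ≤ CR * NA * K + CR ^ 2 * NA := by
      rw [hXdef, hKdef, hCRdef, hNAdef]
      exact_mod_cast hsq
    have h1 : X ≤ (CR * NA * K + CR ^ 2 * NA) / K := (le_div_iff₀ hK0).2 hX
    have h2 : ((CR * NA * K + CR ^ 2 * NA) / K) / CR ^ 2 - NA * (1 / K) = NA / CR := by
      field_simp
      ring
    calc X / CR ^ 2 - NA * (1 / K)
        ≤ ((CR * NA * K + CR ^ 2 * NA) / K) / CR ^ 2 - NA * (1 / K) := by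
          gcongr
    _ = NA / CR := h2
  -- pointwise rewriting of terms
  have hterm : ∀ z : α × (Fin n → γ),
      |(∏ i, (f z.1 (z.2 i) : ℝ)) / (NA * CR ^ n) - 1 / (NA * K ^ n)|
      = (1 / NA) * |(∏ i, p z.1 (z.2 i)) - (1 / K) ^ n| := by
    intro z
    have e1 : (∏ i, (f z.1 (z.2 i) : ℝ)) / (NA * CR ^ n)
        = (1 / NA) * ∏ i, p z.1 (z.2 i) := by
      rw [hpdef]
      rw [Finset.prod_div_distrib, Finset.prod_const, Finset.card_univ, Fintype.card_fin]
      field_simp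
    have e2 : 1 / (NA * K ^ n) = (1 / NA) * (1 / K) ^ n := by
      rw [div_pow, one_pow]
      field_simp
    rw [e1, e2, ← mul_sub, abs_mul, abs_of_nonneg (by positivity : (0:ℝ) ≤ 1 / NA)]
  calc ∑ z : α × (Fin n → γ),
        |(∏ i, (f z.1 (z.2 i) : ℝ)) / (NA * CR ^ n) - 1 / (NA * K ^ n)|
      = (1 / NA) * ∑ A, ∑ cv : Fin n → γ, |(∏ i, p A (cv i)) - (1 / K) ^ n| := by
        rw [Finset.mul_sum]
        rw [Fintype.sum_prod_type]
        refine Finset.sum_congr rfl fun A _ => ?_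
        rw [Finset.mul_sum]
        exact Finset.sum_congr rfl fun cv _ => hterm (A, cv)
    _ ≤ (1 / NA) * ∑ A, ((n : ℝ) * ∑ c, |p A c - 1 / K|) := by
        apply mul_le_mul_of_nonneg_left _ (by positivity)
        exact Finset.sum_le_sum fun A _ => aux_hybrid hK (p A) (hp0 A) (hp1 A) n
    _ ≤ (1 / NA) * ∑ A, ((n : ℝ) * Real.sqrt (K * g A)) := by
        apply mul_le_mul_of_nonneg_left _ (by positivity)
        refine Finset.sum_le_sum fun A _ => mul_le_mul_of_nonneg_left ?_ (by positivity)
        have h := aux_cs (fun c : γ => |p A c - 1 / K|) (fun c => abs_nonneg _)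
        simpa [sq_abs, hgdef, ← hKdef] using h
    _ = ((n : ℝ) / NA) * ∑ A, Real.sqrt (K * g A) := by
        rw [← Finset.mul_sum]
        ring
    _ ≤ ((n : ℝ) / NA) * Real.sqrt (NA * ∑ A, (Real.sqrt (K * g A)) ^ 2) := by
        apply mul_le_mul_of_nonneg_left _ (by positivity)
        have h := aux_cs (fun A : α => Real.sqrt (K * g A)) (fun A => Real.sqrt_nonneg _)
        simpa [← hNAdef] using h
    _ = ((n : ℝ) / NA) * Real.sqrt (NA * (K * ∑ A, g A)) := by
        congr 1
        have hsq' : ∀ A : α, (Real.sqrt (K * g A)) ^ 2 = K * g A :=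
          fun A => Real.sq_sqrt (mul_nonneg hK0.le (hg0 A))
        simp only [hsq', Finset.mul_sum]
    _ ≤ ((n : ℝ) / NA) * Real.sqrt (NA * (K * (NA / CR))) := by
        apply mul_le_mul_of_nonneg_left _ (by positivity)
        apply Real.sqrt_le_sqrt
        have : 0 ≤ K := hK0.le
        gcongr
    _ = (n : ℝ) * Real.sqrt K / Real.sqrt CR := by
        have e : NA * (K * (NA / CR)) = NA ^ 2 * (K / CR) := by ring
        rw [e, Real.sqrt_mul (sq_nonneg NA), Real.sqrt_sq hNA0.le,
          Real.sqrt_div hK0.le]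
        field_simp

/-- Sample `a ∈ (ℤ/Qℤ)^M` uniformly and `S_1, …, S_{M'} ⊆ [M]` independent
uniform subsets of size `t`, and set `c_i := ∑_{j ∈ S_i} a_j mod Q`. Then the joint
distribution of `(a, c)` is within statistical distance
`δ := (M'+1) · Q^{1/4} · C(M,t)^{-1/4}` of uniform on `(ℤ/Qℤ)^{M+M'}`, and moreover
`δ ≤ (M'+1) · (Q t^t / M^t)^{1/4}`. -/
theorem stmt_3 (Q M M' t : ℕ) [NeZero Q] (hQ : 2 ≤ Q) (hM : 1 ≤ M) (hM' : 1 ≤ M')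
    (ht : 1 ≤ t) (htM : t ≤ M) :
    (∑ z : (Fin M → ZMod Q) × (Fin M' → ZMod Q),
        |((Finset.univ.filter
            (fun ω : (Fin M → ZMod Q) × (Fin M' → {S : Finset (Fin M) // S.card = t}) =>
              ω.1 = z.1 ∧ (fun i => ∑ j ∈ (ω.2 i).1, ω.1 j) = z.2)).card : ℝ)
            / Fintype.card
                ((Fin M → ZMod Q) × (Fin M' → {S : Finset (Fin M) // S.card = t}))
          - 1 / (Q : ℝ) ^ (M + M')|)
      ≤ ((M' : ℝ) + 1) * (Q : ℝ) ^ ((1 : ℝ) / 4) * (M.choose t : ℝ) ^ (-(1 : ℝ) / 4)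
    ∧ ((M' : ℝ) + 1) * (Q : ℝ) ^ ((1 : ℝ) / 4) * (M.choose t : ℝ) ^ (-(1 : ℝ) / 4)
      ≤ ((M' : ℝ) + 1) * ((Q : ℝ) * (t : ℝ) ^ t / (M : ℝ) ^ t) ^ ((1 : ℝ) / 4) := by
  classical
  have hQ0 : 0 < Q := by omega
  have hC : 0 < M.choose t := Nat.choose_pos htM
  have hKcard : Fintype.card (ZMod Q) = Q := ZMod.card Q
  have hK : 0 < Fintype.card (ZMod Q) := by rw [hKcard]; omega
  have hNAcard : Fintype.card (Fin M → ZMod Q) = Q ^ M := by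
    rw [Fintype.card_fun, ZMod.card, Fintype.card_fin]
  have hNA : 0 < Fintype.card (Fin M → ZMod Q) := by
    rw [hNAcard]; positivity
  have hσcard : Fintype.card {S : Finset (Fin M) // S.card = t} = M.choose t := by
    rw [Fintype.card_finset_len, Fintype.card_fin]
  set f : (Fin M → ZMod Q) → ZMod Q → ℕ := fun A c =>
    (Finset.univ.filter
      (fun S : {S : Finset (Fin M) // S.card = t} => ∑ j ∈ S.1, A j = c)).card with hfdef
  have hsum : ∀ A, ∑ c, f A c = M.choose t := by
    intro A
    rw [hfdef, ← hσcard]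
    exact aux_sum_fiber_card (fun S : {S : Finset (Fin M) // S.card = t} => ∑ j ∈ S.1, A j)
  have hsq : (∑ A : Fin M → ZMod Q, ∑ c : ZMod Q, (f A c) ^ 2) * Fintype.card (ZMod Q)
      ≤ M.choose t * Fintype.card (Fin M → ZMod Q) * Fintype.card (ZMod Q)
        + (M.choose t) ^ 2 * Fintype.card (Fin M → ZMod Q) := by
    rw [hKcard, hNAcard]
    have hstep : Q ^ (M - 1) * Q = Q ^ M := by
      rw [← pow_succ]
      congr 1
      omega
    calc (∑ A : Fin M → ZMod Q, ∑ c : ZMod Q, (f A c) ^ 2) * Q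
        ≤ (M.choose t * Q ^ M + (M.choose t) ^ 2 * Q ^ (M - 1)) * Q :=
          Nat.mul_le_mul_right _ aux_sum_sq_le
      _ = M.choose t * Q ^ M * Q + (M.choose t) ^ 2 * (Q ^ (M - 1) * Q) := by ring
      _ = M.choose t * Q ^ M * Q + (M.choose t) ^ 2 * Q ^ M := by rw [hstep]
  have key := aux_main_bound (α := Fin M → ZMod Q) (γ := ZMod Q) M' (M.choose t) f
    hC hK hNA hsum hsq
  -- identify the theorem's LHS with the key's LHS
  have hcount : ∀ z : (Fin M → ZMod Q) × (Fin M' → ZMod Q),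
      (Finset.univ.filter
        (fun ω : (Fin M → ZMod Q) × (Fin M' → {S : Finset (Fin M) // S.card = t}) =>
          ω.1 = z.1 ∧ (fun i => ∑ j ∈ (ω.2 i).1, ω.1 j) = z.2)).card
      = ∏ i, f z.1 (z.2 i) := by
    intro z
    rw [hfdef]
    convert aux_count_eq
      (fun (A : Fin M → ZMod Q) (S : {S : Finset (Fin M) // S.card = t}) => ∑ j ∈ S.1, A j)
      z.1 z.2 using 2 <;> congr!
  have htot : ((Fintype.card
      ((Fin M → ZMod Q) × (Fin M' → {S : Finset (Fin M) // S.card = t})) : ℕ) : ℝ)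
      = (Fintype.card (Fin M → ZMod Q) : ℝ) * ((M.choose t : ℕ) : ℝ) ^ M' := by
    rw [Fintype.card_prod,
      show Fintype.card (Fin M' → {S : Finset (Fin M) // S.card = t}) = (M.choose t) ^ M' by
        rw [Fintype.card_fun, hσcard, Fintype.card_fin]]
    push_cast
    ring
  have hpow : (1 : ℝ) / (Q : ℝ) ^ (M + M')
      = 1 / ((Fintype.card (Fin M → ZMod Q) : ℝ) * (Fintype.card (ZMod Q) : ℝ) ^ M') := by
    rw [hNAcard, hKcard]
    push_cast
    rw [pow_add]
  have hLHSeq : (∑ z : (Fin M → ZMod Q) × (Fin M' → ZMod Q),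
        |((Finset.univ.filter
            (fun ω : (Fin M → ZMod Q) × (Fin M' → {S : Finset (Fin M) // S.card = t}) =>
              ω.1 = z.1 ∧ (fun i => ∑ j ∈ (ω.2 i).1, ω.1 j) = z.2)).card : ℝ)
            / Fintype.card
                ((Fin M → ZMod Q) × (Fin M' → {S : Finset (Fin M) // S.card = t}))
          - 1 / (Q : ℝ) ^ (M + M')|)
      = ∑ z : (Fin M → ZMod Q) × (Fin M' → ZMod Q),
          |(∏ i, (f z.1 (z.2 i) : ℝ))
              / ((Fintype.card (Fin M → ZMod Q) : ℝ) * ((M.choose t : ℕ) : ℝ) ^ M')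
            - 1 / ((Fintype.card (Fin M → ZMod Q) : ℝ)
                * (Fintype.card (ZMod Q) : ℝ) ^ M')| := by
    refine Finset.sum_congr rfl fun z _ => ?_
    rw [← hpow, ← htot, hcount z]
    push_cast
    ring_nf
  have hb1 : (∑ z : (Fin M → ZMod Q) × (Fin M' → ZMod Q),
        |((Finset.univ.filter
            (fun ω : (Fin M → ZMod Q) × (Fin M' → {S : Finset (Fin M) // S.card = t}) =>
              ω.1 = z.1 ∧ (fun i => ∑ j ∈ (ω.2 i).1, ω.1 j) = z.2)).card : ℝ)
            / Fintype.card
                ((Fin M → ZMod Q) × (Fin M' → {S : Finset (Fin M) // S.card = t}))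
          - 1 / (Q : ℝ) ^ (M + M')|)
      ≤ (M' : ℝ) * Real.sqrt Q / Real.sqrt (M.choose t) := by
    rw [hLHSeq]
    calc _ ≤ (M' : ℝ) * Real.sqrt (Fintype.card (ZMod Q)) / Real.sqrt (M.choose t) := key
      _ = (M' : ℝ) * Real.sqrt Q / Real.sqrt (M.choose t) := by rw [hKcard]
  -- the trivial bound by 2
  have hb2 : (∑ z : (Fin M → ZMod Q) × (Fin M' → ZMod Q),
        |((Finset.univ.filter
            (fun ω : (Fin M → ZMod Q) × (Fin M' → {S : Finset (Fin M) // S.card = t}) =>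
              ω.1 = z.1 ∧ (fun i => ∑ j ∈ (ω.2 i).1, ω.1 j) = z.2)).card : ℝ)
            / Fintype.card
                ((Fin M → ZMod Q) × (Fin M' → {S : Finset (Fin M) // S.card = t}))
          - 1 / (Q : ℝ) ^ (M + M')|)
      ≤ 2 := by
    have htotpos : (0:ℝ) < (Fintype.card
        ((Fin M → ZMod Q) × (Fin M' → {S : Finset (Fin M) // S.card = t})) : ℝ) := by
      have h2 : 0 < Fintype.card (Fin M' → {S : Finset (Fin M) // S.card = t}) := by
        rw [Fintype.card_fun, hσcard, Fintype.card_fin]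
        exact pow_pos hC M'
      have : 0 < Fintype.card
          ((Fin M → ZMod Q) × (Fin M' → {S : Finset (Fin M) // S.card = t})) := by
        rw [Fintype.card_prod]
        exact Nat.mul_pos hNA h2
      exact_mod_cast this
    have hsumcount : ∑ z : (Fin M → ZMod Q) × (Fin M' → ZMod Q),
        ((Finset.univ.filter
          (fun ω : (Fin M → ZMod Q) × (Fin M' → {S : Finset (Fin M) // S.card = t}) =>
            ω.1 = z.1 ∧ (fun i => ∑ j ∈ (ω.2 i).1, ω.1 j) = z.2)).card)
        = Fintype.card
            ((Fin M → ZMod Q) × (Fin M' → {S : Finset (Fin M) // S.card = t})) := by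
      convert aux_sum_count
        (fun (A : Fin M → ZMod Q) (S : {S : Finset (Fin M) // S.card = t}) => ∑ j ∈ S.1, A j)
        using 2 <;> congr!
    calc (∑ z : (Fin M → ZMod Q) × (Fin M' → ZMod Q),
          |((Finset.univ.filter
              (fun ω : (Fin M → ZMod Q) × (Fin M' → {S : Finset (Fin M) // S.card = t}) =>
                ω.1 = z.1 ∧ (fun i => ∑ j ∈ (ω.2 i).1, ω.1 j) = z.2)).card : ℝ)
              / Fintype.card
                  ((Fin M → ZMod Q) × (Fin M' → {S : Finset (Fin M) // S.card = t}))
            - 1 / (Q : ℝ) ^ (M + M')|)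
        ≤ ∑ z : (Fin M → ZMod Q) × (Fin M' → ZMod Q),
            (((Finset.univ.filter
              (fun ω : (Fin M → ZMod Q) × (Fin M' → {S : Finset (Fin M) // S.card = t}) =>
                ω.1 = z.1 ∧ (fun i => ∑ j ∈ (ω.2 i).1, ω.1 j) = z.2)).card : ℝ)
              / Fintype.card
                  ((Fin M → ZMod Q) × (Fin M' → {S : Finset (Fin M) // S.card = t}))
            + 1 / (Q : ℝ) ^ (M + M')) := by
          refine Finset.sum_le_sum fun z _ => ?_
          refine (abs_sub _ _).trans ?_
          rw [abs_of_nonneg (by positivity), abs_of_nonneg (by positivity)]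
      _ = 1 + 1 := by
          rw [Finset.sum_add_distrib]
          congr 1
          · rw [← Finset.sum_div]
            rw [show (∑ z : (Fin M → ZMod Q) × (Fin M' → ZMod Q),
              ((Finset.univ.filter
                (fun ω : (Fin M → ZMod Q) × (Fin M' → {S : Finset (Fin M) // S.card = t}) =>
                  ω.1 = z.1 ∧ (fun i => ∑ j ∈ (ω.2 i).1, ω.1 j) = z.2)).card : ℝ))
              = (Fintype.card
                ((Fin M → ZMod Q) × (Fin M' → {S : Finset (Fin M) // S.card = t})) : ℝ)
              from by exact_mod_cast congrArg Nat.cast hsumcount]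
            exact div_self (ne_of_gt htotpos)
          · have hzcard : Fintype.card ((Fin M → ZMod Q) × (Fin M' → ZMod Q))
                = Q ^ (M + M') := by
              rw [Fintype.card_prod, hNAcard,
                show Fintype.card (Fin M' → ZMod Q) = Q ^ M' by
                  rw [Fintype.card_fun, ZMod.card, Fintype.card_fin], ← pow_add]
            rw [Finset.sum_const, Finset.card_univ, nsmul_eq_mul, hzcard, mul_one_div]
            push_cast
            exact div_self (by positivity)
      _ = 2 := by norm_num
  -- numeric endgame
  have hQR : (0:ℝ) < (Q:ℝ) := by exact_mod_cast hQ0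
  have hCR : (0:ℝ) < (M.choose t : ℝ) := by exact_mod_cast hC
  set r : ℝ := (Q:ℝ) / (M.choose t : ℝ) with hr
  have hr0 : 0 < r := div_pos hQR hCR
  have hRHS1 : ((M' : ℝ) + 1) * (Q : ℝ) ^ ((1 : ℝ) / 4) * (M.choose t : ℝ) ^ (-(1 : ℝ) / 4)
      = ((M' : ℝ) + 1) * r ^ ((1 : ℝ) / 4) := by
    rw [hr, Real.div_rpow hQR.le hCR.le,
      show (-(1:ℝ)) / 4 = -((1:ℝ)/4) by norm_num, Real.rpow_neg hCR.le]
    ring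
  have hM'R : (1:ℝ) ≤ (M' : ℝ) := by exact_mod_cast hM'
  constructor
  · rw [hRHS1]
    rcases le_or_gt (Q:ℝ) (M.choose t : ℝ) with hcase | hcase
    · refine hb1.trans ?_
      have hr1 : r ≤ 1 := by
        rw [hr]
        exact div_le_one_of_le₀ hcase hCR.le
      have h12 : Real.sqrt (Q:ℝ) / Real.sqrt (M.choose t : ℝ) = r ^ ((1:ℝ)/2) := by
        rw [hr, ← Real.sqrt_div hQR.le, Real.sqrt_eq_rpow]
      calc (M' : ℝ) * Real.sqrt Q / Real.sqrt (M.choose t)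
          = (M' : ℝ) * (Real.sqrt (Q:ℝ) / Real.sqrt (M.choose t : ℝ)) := by ring
        _ = (M' : ℝ) * r ^ ((1:ℝ)/2) := by rw [h12]
        _ ≤ ((M' : ℝ) + 1) * r ^ ((1:ℝ)/4) := by
            apply mul_le_mul (by linarith)
              (Real.rpow_le_rpow_of_exponent_ge hr0 hr1 (by norm_num))
              (Real.rpow_nonneg hr0.le _) (by linarith)
    · refine hb2.trans ?_
      have h1 : 1 ≤ r ^ ((1:ℝ)/4) := by
        apply Real.one_le_rpow _ (by norm_num)
        rw [hr]
        exact (one_le_div hCR).2 hcase.le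
      calc (2:ℝ) ≤ ((M' : ℝ) + 1) * 1 := by linarith
        _ ≤ ((M' : ℝ) + 1) * r ^ ((1:ℝ)/4) := by
            apply mul_le_mul_of_nonneg_left h1 (by linarith)
  · rw [hRHS1]
    apply mul_le_mul_of_nonneg_left _ (by linarith)
    apply Real.rpow_le_rpow hr0.le _ (by norm_num)
    rw [hr, div_le_div_iff₀ hCR (by positivity : (0:ℝ) < (M:ℝ) ^ t)]
    have hn : ((M:ℝ)) ^ t ≤ (M.choose t : ℝ) * (t:ℝ) ^ t := by
      exact_mod_cast aux_pow_le_choose t M htM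
    calc (Q:ℝ) * (M:ℝ) ^ t ≤ (Q:ℝ) * ((M.choose t : ℝ) * (t:ℝ) ^ t) :=
          mul_le_mul_of_nonneg_left hn hQR.le
      _ = (Q:ℝ) * (t:ℝ) ^ t * (M.choose t : ℝ) := by ring
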